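/- For any field K, the universal Novikov field Λ_{K,univ} = HahnSeries ℝ K is complete with respect to the nonarchimedean metric d(x, y) = exp(−ν(x − y)) for x ≠ y and d(x, x) = 0, where ν is the order valuation; that is, every Cauchy sequence for this metric converges in HahnSeries ℝ K. -/

import Mathlib

/-!
STATEMENT 7: For any field `K`, the universal Novikov field `Λ_{K,univ} = HahnSeries ℝ K`
is complete with respect to the nonarchimedean metric `d(x,y) = exp(−ν(x−y))` for `x ≠ y`
and `d(x,x) = 0`, where `ν` is the order valuation: every Cauchy sequence for this metric
converges.
-/

theorem novikov_field_complete
    {K : Type*} [Field K]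
    (d : HahnSeries ℝ K → HahnSeries ℝ K → ℝ)
    (hd_self : ∀ x, d x x = 0)
    (hd : ∀ x y, x ≠ y → d x y = Real.exp (-(x - y).order))
    (u : ℕ → HahnSeries ℝ K)
    (hu : ∀ ε : ℝ, 0 < ε → ∃ N : ℕ, ∀ m ≥ N, ∀ n ≥ N, d (u m) (u n) < ε) :
    ∃ L : HahnSeries ℝ K, ∀ ε : ℝ, 0 < ε → ∃ N : ℕ, ∀ n ≥ N, d (u n) L < ε := by
  -- For each cutoff `c`, choose an index beyond which coefficients below `c` stabilize.
  choose N hN using fun c : ℝ => hu (Real.exp (-c)) (Real.exp_pos _)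
  -- Stabilization of coefficients
  have stab : ∀ c : ℝ, ∀ m ≥ N c, ∀ n ≥ N c, ∀ r ≤ c,
      (u m).coeff r = (u n).coeff r := by
    intro c m hm n hn r hr
    by_cases h : u m = u n
    · rw [h]
    · have hlt := hN c m hm n hn
      rw [hd _ _ h] at hlt
      have horder : c < (u m - u n).order := by
        have := (Real.exp_lt_exp.mp hlt)
        linarith
      have hz : (u m - u n).coeff r = 0 :=
        HahnSeries.coeff_eq_zero_of_lt_order (lt_of_le_of_lt hr horder)
      rw [HahnSeries.coeff_sub] at hz
      exact sub_eq_zero.mp hz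
  set f : ℝ → K := fun r => (u (N r)).coeff r with hf
  have agree : ∀ c : ℝ, ∀ r ≤ c, f r = (u (N c)).coeff r := by
    intro c r hr
    have h1 : (u (N r)).coeff r = (u (max (N r) (N c))).coeff r :=
      stab r (N r) le_rfl _ (le_max_left _ _) r le_rfl
    have h2 : (u (max (N r) (N c))).coeff r = (u (N c)).coeff r :=
      stab c _ (le_max_right _ _) (N c) le_rfl r hr
    simpa [hf] using h1.trans h2
  have hsupp : (Function.support f).IsPWO := by
    refine Set.IsWF.isPWO ?_
    rw [Set.isWF_iff_no_descending_seq]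
    intro g hg hgs
    -- all values of g lie below g 0, hence in the support of u (N (g 0))
    have hmem : ∀ n : ℕ, g n ∈ (u (N (g 0))).support := by
      intro n
      have hle : g n ≤ g 0 := hg.antitone (Nat.zero_le n)
      have := hgs n
      rw [Function.mem_support] at this
      rw [HahnSeries.mem_support]
      rw [← agree (g 0) (g n) hle]
      exact this
    have := (u (N (g 0))).isPWO_support.isWF
    rw [Set.isWF_iff_no_descending_seq] at this
    exact this g hg hmem
  refine ⟨⟨f, hsupp⟩, ?_⟩
  intro ε hε
  set c : ℝ := -Real.log ε with hc
  refine ⟨N c, fun n hn => ?_⟩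
  set L : HahnSeries ℝ K := ⟨f, hsupp⟩ with hL
  by_cases h : u n = L
  · rw [h, hd_self]; exact hε
  · rw [hd _ _ h]
    have horder : c < (u n - L).order := by
      by_contra hle
      push_neg at hle
      have hcoeff : (u n - L).coeff (u n - L).order = 0 := by
        rw [HahnSeries.coeff_sub]
        have h1 : L.coeff (u n - L).order = (u (N c)).coeff (u n - L).order :=
          agree c _ hle
        have h2 : (u n).coeff (u n - L).order = (u (N c)).coeff (u n - L).order :=
          stab c n hn (N c) le_rfl _ hle
        rw [h1, h2, sub_self]
      exact sub_ne_zero.mpr h (HahnSeries.coeff_order_eq_zero.mp hcoeff)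
    calc Real.exp (-(u n - L).order) < Real.exp (-c) := by
          exact Real.exp_lt_exp.mpr (by linarith)
      _ = ε := by rw [hc, neg_neg, Real.exp_log hε]
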